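/- With the block-embedded SU(2) matrices R_k(r_k, w_k) as above (acting on coordinates 1 and k+1 of ℂ^{K+1}), the first column of the ordered product ∏_{k=1}^{K} R_k(r_k, w_k) equals (r_1 r_2 ⋯ r_K, −r_2⋯r_K w̄_1, −r_3⋯r_K w̄_2, …, −r_K w̄_{K−1}, −w̄_K)ᵀ. -/

import Mathlib

open Complex

noncomputable section

/-- The block-embedded `SU(2)` rotation `R_k(r, w)` acting on coordinates `0`
and `k+1` of `ℂ^{K+1}`: it is the identity except that its entries at
positions `(0,0), (0,k+1), (k+1,0), (k+1,k+1)` are `r, w, −w̄, r`. -/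
def Rblk (K : ℕ) (k : Fin K) (r : ℝ) (w : ℂ) : Matrix (Fin (K + 1)) (Fin (K + 1)) ℂ :=
  fun i j =>
    if i = 0 then (if j = 0 then (r : ℂ) else if j = k.succ then w else 0)
    else if i = k.succ then
      (if j = 0 then -(starRingEnd ℂ) w else if j = k.succ then (r : ℂ) else 0)
    else (if i = j then 1 else 0)

end

/-- The first column of the ordered product `∏_{k=1}^{K} R_k(r_k, w_k)` is
`(r_1⋯r_K, −r_2⋯r_K w̄_1, …, −r_K w̄_{K−1}, −w̄_K)ᵀ`. -/
theorem Rblk_product_first_column (K : ℕ) (r : Fin K → ℝ) (w : Fin K → ℂ)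
    (hn : ∀ k, r k ^ 2 + ‖w k‖ ^ 2 = 1) :
    ((List.ofFn fun k => Rblk K k (r k) (w k)).prod 0 0
        = ∏ k : Fin K, (r k : ℂ)) ∧
    ∀ k : Fin K,
      (List.ofFn fun k => Rblk K k (r k) (w k)).prod k.succ 0
        = -(∏ l ∈ Finset.univ.filter fun l => k < l, (r l : ℂ)) *
            (starRingEnd ℂ) (w k) := by
  classical
  set M : Fin K → Matrix (Fin (K + 1)) (Fin (K + 1)) ℂ :=
    fun k => Rblk K k (r k) (w k) with hM
  have key : ∀ d j : ℕ, j + d = K →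
      (((List.ofFn M).drop j).prod 0 0
          = ∏ l ∈ Finset.univ.filter (fun l : Fin K => j ≤ l.val), (r l : ℂ)) ∧
      ∀ k : Fin K, ((List.ofFn M).drop j).prod k.succ 0
          = if j ≤ (k : ℕ) then
              -(∏ l ∈ Finset.univ.filter fun l => k < l, (r l : ℂ)) *
                (starRingEnd ℂ) (w k)
            else 0 := by
    intro d
    induction d with
    | zero =>
      intro j hj
      have hjK : j = K := by omega
      have hdrop : (List.ofFn M).drop j = [] := by rw [hjK]; simp
      rw [hdrop, List.prod_nil]
      constructor
      · have : Finset.univ.filter (fun l : Fin K => j ≤ l.val) = ∅ := by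
          ext l
          simp only [Finset.mem_filter, Finset.mem_univ, true_and,
            Finset.notMem_empty, iff_false]
          have := l.isLt; omega
        simp [this, Matrix.one_apply]
      · intro k
        have := k.isLt
        rw [if_neg (by omega)]
        simp [Matrix.one_apply, Fin.succ_ne_zero k]
    | succ d ih =>
      intro j hj
      have hjK : j < K := by omega
      obtain ⟨ih0, ihs⟩ := ih (j + 1) (by omega)
      set jf : Fin K := ⟨j, hjK⟩ with hjf
      have hdrop : (List.ofFn M).drop j = M jf :: (List.ofFn M).drop (j + 1) := by
        rw [List.drop_eq_getElem_cons (by simpa using hjK)]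
        simp [hjf]
      rw [hdrop, List.prod_cons]
      set Q := ((List.ofFn M).drop (j + 1)).prod with hQ
      have hQjs : Q jf.succ 0 = 0 := by
        rw [ihs jf, if_neg (by simp [hjf])]
      have hsz : (0 : Fin (K + 1)) ≠ jf.succ := (Fin.succ_ne_zero jf).symm
      -- row 0
      have row0 : (M jf * Q) 0 0 = (r jf : ℂ) * Q 0 0 + w jf * Q jf.succ 0 := by
        rw [Matrix.mul_apply]
        have hterm : ∀ m : Fin (K + 1), M jf 0 m * Q m 0
            = (if m = 0 then (r jf : ℂ) * Q 0 0 else 0)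
              + (if m = jf.succ then w jf * Q jf.succ 0 else 0) := by
          intro m
          simp only [hM, Rblk, if_pos rfl]
          split_ifs with h1 h2 <;> subst_vars <;>
            simp_all
        rw [Finset.sum_congr rfl fun m _ => hterm m, Finset.sum_add_distrib]
        simp
      -- row jf.succ
      have rows : (M jf * Q) jf.succ 0
          = -(starRingEnd ℂ) (w jf) * Q 0 0 + (r jf : ℂ) * Q jf.succ 0 := by
        rw [Matrix.mul_apply]
        have hterm : ∀ m : Fin (K + 1), M jf jf.succ m * Q m 0
            = (if m = 0 then -(starRingEnd ℂ) (w jf) * Q 0 0 else 0)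
              + (if m = jf.succ then (r jf : ℂ) * Q jf.succ 0 else 0) := by
          intro m
          simp only [hM, Rblk, if_neg (Fin.succ_ne_zero jf), if_pos rfl]
          split_ifs with h1 h2 <;> subst_vars <;>
            simp_all
        rw [Finset.sum_congr rfl fun m _ => hterm m, Finset.sum_add_distrib]
        simp
      -- other rows
      have rowo : ∀ k : Fin K, k ≠ jf → (M jf * Q) k.succ 0 = Q k.succ 0 := by
        intro k hk
        rw [Matrix.mul_apply]
        have hterm : ∀ m : Fin (K + 1), M jf k.succ m * Q m 0
            = if k.succ = m then Q m 0 else 0 := by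
          intro m
          have h1 : (k.succ : Fin (K + 1)) ≠ 0 := Fin.succ_ne_zero k
          have h2 : (k.succ : Fin (K + 1)) ≠ jf.succ := by
            simpa [Fin.succ_inj] using hk
          simp only [hM, Rblk, if_neg h1, if_neg h2]
          split_ifs <;> simp
        rw [Finset.sum_congr rfl fun m _ => hterm m]
        simp
      have hfilter : Finset.univ.filter (fun l : Fin K => j ≤ l.val)
          = insert jf (Finset.univ.filter (fun l : Fin K => j + 1 ≤ l.val)) := by
        ext l
        simp only [Finset.mem_filter, Finset.mem_univ, true_and, Finset.mem_insert,
          hjf, Fin.ext_iff]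
        omega
      have hfilter2 : (Finset.univ.filter fun l : Fin K => jf < l)
          = Finset.univ.filter (fun l : Fin K => j + 1 ≤ l.val) := by
        ext l
        simp only [Finset.mem_filter, Finset.mem_univ, true_and, hjf, Fin.lt_def]
        omega
      constructor
      · rw [row0, hQjs, mul_zero, add_zero, ih0, hfilter,
          Finset.prod_insert (by simp [hjf])]
      · intro k
        by_cases hk : k = jf
        · subst hk
          rw [rows, hQjs, mul_zero, add_zero, ih0, if_pos (le_refl _), hfilter2]
          ring
        · rw [rowo k hk, ihs k]
          have hne : (k : ℕ) ≠ j := fun h => hk (Fin.ext h)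
          split_ifs with h1 h2 h2 <;> first | rfl | omega
  obtain ⟨h0, hs⟩ := key K 0 (by omega)
  rw [List.drop_zero] at h0 hs
  refine ⟨?_, fun k => ?_⟩
  · rw [h0]
    congr 1
    ext l
    simp
  · rw [hs k, if_pos (Nat.zero_le _)]
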